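/- Let δ > 0 and h ∈ K, and set Ψ_h(x) = 1 + δ·h(x) and C_h = (∫₀^∞ (1/Ψ_h(η))·exp(−2∫₀^η ξ/Ψ_h(ξ) dξ) dη)^{−1}. Then the constant C_h satisfies 2/√(π(1+δ)) ≤ C_h ≤ 2(1+δ)/√π. -/

import Mathlib

open Real MeasureTheory Filter

/-- `Ψ_h(x) = 1 + δ·h(x)`. -/
noncomputable def Psi (δ : ℝ) (h : ℝ → ℝ) (x : ℝ) : ℝ := 1 + δ * h x

/-- The integrand `(1/Ψ_h(η)) · exp(−2∫₀^η ξ/Ψ_h(ξ) dξ)`. -/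
noncomputable def F (δ : ℝ) (h : ℝ → ℝ) (η : ℝ) : ℝ :=
  (1 / Psi δ h η) * Real.exp (-2 * ∫ ξ in (0:ℝ)..η, ξ / Psi δ h ξ)

/-- The full integral `∫₀^∞ (1/Ψ_h(η)) · exp(−2∫₀^η ξ/Ψ_h(ξ) dξ) dη`. -/
noncomputable def Itot (δ : ℝ) (h : ℝ → ℝ) : ℝ := ∫ η in Set.Ioi (0:ℝ), F δ h η

/-- The constant `C_h`. -/
noncomputable def Ch (δ : ℝ) (h : ℝ → ℝ) : ℝ := (Itot δ h)⁻¹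

/-- Membership in the set `K`: analytic on `[0,∞)`, `0 ≤ h ≤ 1` there,
`h(0) = 0` and `h(x) → 1` as `x → ∞`. -/
def MemK (h : ℝ → ℝ) : Prop :=
  AnalyticOnNhd ℝ h (Set.Ici 0) ∧ (∀ x ≥ 0, 0 ≤ h x ∧ h x ≤ 1) ∧ h 0 = 0 ∧
    Tendsto h atTop (nhds 1)

/-- Supremum norm over `[0,∞)`. -/
noncomputable def supNorm (f : ℝ → ℝ) : ℝ := ⨆ x : Set.Ici (0:ℝ), |f (x : ℝ)|

theorem Ch_bounds (δ : ℝ) (hδ : 0 < δ) (h : ℝ → ℝ) (hK : MemK h) :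
    2 / Real.sqrt (π * (1 + δ)) ≤ Ch δ h ∧ Ch δ h ≤ 2 * (1 + δ) / Real.sqrt π := by
  obtain ⟨han, hbd, -, -⟩ := hK
  have hδ1 : (0:ℝ) < 1 + δ := by linarith
  have hΨ1 : ∀ x : ℝ, 0 ≤ x → 1 ≤ Psi δ h x := by
    intro x hx
    have h1 := (hbd x hx).1
    have h2 : 0 ≤ δ * h x := mul_nonneg hδ.le h1
    unfold Psi; linarith
  have hΨ2 : ∀ x : ℝ, 0 ≤ x → Psi δ h x ≤ 1 + δ := by
    intro x hx
    have h1 := (hbd x hx).2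
    have h2 : δ * h x ≤ δ := by nlinarith
    unfold Psi; linarith
  have hΨpos : ∀ x : ℝ, 0 ≤ x → 0 < Psi δ h x := fun x hx =>
    lt_of_lt_of_le one_pos (hΨ1 x hx)
  have hΨcont : ∀ x : ℝ, 0 ≤ x → ContinuousAt (Psi δ h) x := by
    intro x hx
    exact continuousAt_const.add (continuousAt_const.mul (han x hx).continuousAt)
  set g : ℝ → ℝ := fun ξ => ξ / Psi δ h ξ with hgdef
  have hgcont : ∀ x : ℝ, 0 ≤ x → ContinuousAt g x := fun x hx =>
    continuousAt_id.div (hΨcont x hx) (ne_of_gt (hΨpos x hx))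
  have hgint : ∀ b : ℝ, 0 ≤ b → IntervalIntegrable g volume 0 b := by
    intro b hb
    apply ContinuousOn.intervalIntegrable
    intro x hx
    rw [Set.uIcc_of_le hb] at hx
    exact (hgcont x hx.1).continuousWithinAt
  set G : ℝ → ℝ := fun η => ∫ ξ in (0:ℝ)..η, g ξ with hGdef
  -- bounds on inner integral
  have hGub : ∀ η : ℝ, 0 ≤ η → G η ≤ η ^ 2 / 2 := by
    intro η hη
    have hle : G η ≤ ∫ ξ in (0:ℝ)..η, ξ := by
      apply intervalIntegral.integral_mono_on hη (hgint η hη) intervalIntegral.intervalIntegrable_id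
      intro x hx
      exact div_le_self hx.1 (hΨ1 x hx.1)
    rw [integral_id] at hle
    calc G η ≤ (η ^ 2 - 0 ^ 2) / 2 := hle
      _ = η ^ 2 / 2 := by ring
  have hGlb : ∀ η : ℝ, 0 ≤ η → η ^ 2 / (2 * (1 + δ)) ≤ G η := by
    intro η hη
    have hle : (∫ ξ in (0:ℝ)..η, ξ / (1 + δ)) ≤ G η := by
      apply intervalIntegral.integral_mono_on hη
        (intervalIntegral.intervalIntegrable_id.div_const _) (hgint η hη)
      intro x hx
      exact div_le_div_of_nonneg_left hx.1 (hΨpos x hx.1) (hΨ2 x hx.1)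
    rw [intervalIntegral.integral_div, integral_id, div_div] at hle
    simpa using hle
  -- bounds on F on Ioi 0
  have hFub : ∀ η ∈ Set.Ioi (0:ℝ), F δ h η ≤ Real.exp (-(1 / (1 + δ)) * η ^ 2) := by
    intro η hη
    have hη' : (0:ℝ) ≤ η := le_of_lt hη
    have h1 : 1 / Psi δ h η ≤ 1 := by
      rw [div_le_one (hΨpos η hη')]; exact hΨ1 η hη'
    have h2 : Real.exp (-2 * G η) ≤ Real.exp (-(1 / (1 + δ)) * η ^ 2) := by
      apply Real.exp_le_exp.mpr
      have hG := hGlb η hη'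
      have e : -(1 / (1 + δ)) * η ^ 2 = -2 * (η ^ 2 / (2 * (1 + δ))) := by
        field_simp
      rw [e]
      linarith
    calc F δ h η = (1 / Psi δ h η) * Real.exp (-2 * G η) := rfl
      _ ≤ 1 * Real.exp (-(1 / (1 + δ)) * η ^ 2) :=
          mul_le_mul h1 h2 (Real.exp_pos _).le one_pos.le
      _ = Real.exp (-(1 / (1 + δ)) * η ^ 2) := one_mul _
  have hFlb : ∀ η ∈ Set.Ioi (0:ℝ), Real.exp (-1 * η ^ 2) / (1 + δ) ≤ F δ h η := by
    intro η hη
    have hη' : (0:ℝ) ≤ η := le_of_lt hη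
    have h1 : 1 / (1 + δ) ≤ 1 / Psi δ h η :=
      div_le_div_of_nonneg_left one_pos.le (hΨpos η hη') (hΨ2 η hη')
    have h2 : Real.exp (-1 * η ^ 2) ≤ Real.exp (-2 * G η) := by
      apply Real.exp_le_exp.mpr
      have := hGub η hη'
      nlinarith
    calc Real.exp (-1 * η ^ 2) / (1 + δ)
        = (1 / (1 + δ)) * Real.exp (-1 * η ^ 2) := by ring
      _ ≤ (1 / Psi δ h η) * Real.exp (-2 * G η) :=
          mul_le_mul h1 h2 (Real.exp_pos _).le (one_div_pos.mpr (hΨpos η hη')).le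
      _ = F δ h η := rfl
  have hFpos : ∀ η ∈ Set.Ioi (0:ℝ), 0 ≤ F δ h η := by
    intro η hη
    exact le_trans (by positivity) (hFlb η hη)
  -- continuity (hence measurability) of F on Ioi 0
  have hFcont : ContinuousOn (F δ h) (Set.Ioi 0) := by
    intro x hx
    have hx' : (0:ℝ) < x := hx
    have hGat : ContinuousAt G x := by
      have hmeas : StronglyMeasurableAtFilter g (nhds x) := by
        refine ⟨Set.Ioi 0, Ioi_mem_nhds hx', ?_⟩
        exact ContinuousOn.aestronglyMeasurable
          (fun y hy => (hgcont y (le_of_lt hy)).continuousWithinAt) measurableSet_Ioi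
      exact (intervalIntegral.integral_hasDerivAt_right (hgint x hx'.le) hmeas
        (hgcont x hx'.le)).continuousAt
    have hca : ContinuousAt (F δ h) x := by
      apply ContinuousAt.mul
      · exact continuousAt_const.div (hΨcont x hx'.le) (ne_of_gt (hΨpos x hx'.le))
      · exact Real.continuous_exp.continuousAt.comp (continuousAt_const.mul hGat)
    exact hca.continuousWithinAt
  -- integrability
  have hub_int : IntegrableOn (fun η => Real.exp (-(1 / (1 + δ)) * η ^ 2)) (Set.Ioi 0) :=
    (integrable_exp_neg_mul_sq (by positivity)).integrableOn
  have hlb_int : IntegrableOn (fun η => Real.exp (-1 * η ^ 2) / (1 + δ)) (Set.Ioi 0) :=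
    ((integrable_exp_neg_mul_sq one_pos).integrableOn).div_const _
  have hFint : IntegrableOn (F δ h) (Set.Ioi 0) := by
    apply Integrable.mono' hub_int (hFcont.aestronglyMeasurable measurableSet_Ioi)
    filter_upwards [ae_restrict_mem measurableSet_Ioi] with η hη
    rw [Real.norm_eq_abs, abs_of_nonneg (hFpos η hη)]
    exact hFub η hη
  -- bounds on the total integral
  have hItot_ub : Itot δ h ≤ Real.sqrt (π * (1 + δ)) / 2 := by
    have hle := setIntegral_mono_on hFint hub_int measurableSet_Ioi hFub
    rw [integral_gaussian_Ioi, one_div, div_inv_eq_mul] at hle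
    exact hle
  have hItot_lb : Real.sqrt π / (2 * (1 + δ)) ≤ Itot δ h := by
    have hle := setIntegral_mono_on hlb_int hFint measurableSet_Ioi hFlb
    rw [MeasureTheory.integral_div, integral_gaussian_Ioi, div_one, div_div] at hle
    exact hle
  have hsqrtpos : 0 < Real.sqrt π := Real.sqrt_pos.mpr Real.pi_pos
  have hItot_pos : 0 < Itot δ h := lt_of_lt_of_le (by positivity) hItot_lb
  constructor
  · calc 2 / Real.sqrt (π * (1 + δ)) = (Real.sqrt (π * (1 + δ)) / 2)⁻¹ := by
          rw [inv_div]
      _ ≤ (Itot δ h)⁻¹ := inv_anti₀ hItot_pos hItot_ub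
  · calc (Itot δ h)⁻¹ ≤ (Real.sqrt π / (2 * (1 + δ)))⁻¹ :=
          inv_anti₀ (by positivity) hItot_lb
      _ = 2 * (1 + δ) / Real.sqrt π := by rw [inv_div]
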